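/- arXiv:1010.4212 — 2 statements merged into one kernel-verified Lean document; each statement's English description precedes it below -/
import Mathlib

section
/- Let M be a countable Urysohn metric space with finite distance set D, A ⊆ M finite, and s, t two Katětov functions with dom(s) = dom(t) = A. Then the set d(s,t) of distances d(x,y) realized by pairs x ∈ orb(s), y ∈ orb(t) equals {m ∈ D : max_{x∈A}|s(x) − t(x)| ≤ m ≤ min_{x∈A}(s(x) + t(x))}. -/
namespace Sauer

def IsMetricTriple (a b c : ℝ) : Prop := a ≤ b + c ∧ b ≤ a + c ∧ c ≤ a + b

def IsUniversalDist (D : Set ℝ) : Prop :=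
  D.Finite ∧ (0 : ℝ) ∈ D ∧ (∀ d ∈ D, 0 ≤ d) ∧
    ∀ s x₀ y₀ x₁ y₁ : ℝ, s ∈ D → x₀ ∈ D → y₀ ∈ D → x₁ ∈ D → y₁ ∈ D →
      0 < x₀ → 0 < y₀ → 0 < x₁ → 0 < y₁ →
      IsMetricTriple x₀ y₀ s → IsMetricTriple x₁ y₁ s →
      ∃ t ∈ D, 0 < t ∧ IsMetricTriple x₀ x₁ t ∧ IsMetricTriple y₀ y₁ t

open Classical in
noncomputable def dsucc (D : Set ℝ) (r : ℝ) : ℝ :=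
  if ({s | s ∈ D ∧ r < s}).Nonempty then sInf {s | s ∈ D ∧ r < s} else r

noncomputable def dpred (D : Set ℝ) (r : ℝ) : ℝ := sSup {s | s ∈ D ∧ s < r}

def IsBlock (D B : Set ℝ) : Prop :=
  ∃ (n : ℕ) (b : ℕ → ℝ),
    B = {x | ∃ i, i ≤ n ∧ x = b i} ∧
    (∀ i ≤ n, b i ∈ D) ∧ 0 < b 0 ∧
    (∀ i < n, b i < b (i + 1)) ∧
    (∀ y ∈ D, y < b 0 → 2 * y < b 0) ∧
    (∀ i < n, b (i + 1) = dsucc D (b i)) ∧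
    (∀ i < n, b (i + 1) ≤ b i + b 0)

def IsJump (D : Set ℝ) (r : ℝ) : Prop := r ∈ D ∧ ∀ s ∈ D, r < s → 2 * r < s

structure Katetov (D : Set ℝ) (M : Type) [MetricSpace M] where
  dom : Finset M
  f : M → ℝ
  mem : ∀ x ∈ dom, f x ∈ D
  pos : ∀ x ∈ dom, 0 < f x
  ineq1 : ∀ x ∈ dom, ∀ y ∈ dom, |f x - f y| ≤ dist x y
  ineq2 : ∀ x ∈ dom, ∀ y ∈ dom, dist x y ≤ f x + f y

variable {D : Set ℝ} {M : Type} [MetricSpace M]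

def orb (t : Katetov D M) : Set M :=
  {y | y ∉ t.dom ∧ ∀ x ∈ t.dom, dist y x = t.f x}

noncomputable def rank (t : Katetov D M) : ℝ := sInf (t.f '' ↑t.dom)

def orbDistSet (s t : Katetov D M) : Set ℝ :=
  {m | ∃ x ∈ orb s, ∃ y ∈ orb t, dist x y = m}

noncomputable def dminK (s t : Katetov D M) : ℝ := sInf (orbDistSet s t)

noncomputable def dmin (A B : Set M) : ℝ := sInf {d | ∃ x ∈ A, ∃ y ∈ B, dist x y = d}

def IsHomogeneous (M : Type) [MetricSpace M] : Prop :=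
  ∀ (A : Finset M) (f : M → M),
    (∀ x ∈ A, ∀ y ∈ A, dist (f x) (f y) = dist x y) →
    ∃ g : M ≃ᵢ M, ∀ x ∈ A, g x = f x

def IsUrysohn (D : Set ℝ) (M : Type) [MetricSpace M] : Prop :=
  Countable M ∧ (∀ x y : M, dist x y ∈ D) ∧ IsHomogeneous M ∧
    ∀ (N : Type) [MetricSpace N], Finite N → (∀ x y : N, dist x y ∈ D) →
      ∃ f : N → M, Isometry f

/-- The distinguished extension values: `false ↦ s.f`, `true ↦ t.f`. -/
noncomputable def pairF (s t : Katetov D M) : Bool → M → ℝ :=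
  fun i => if i then t.f else s.f

/-- Distance on `↥s.dom ⊕ Bool` realizing two new points at distance `m`. -/
noncomputable def pairDist (s t : Katetov D M) (m : ℝ) :
    (↥s.dom ⊕ Bool) → (↥s.dom ⊕ Bool) → ℝ
  | Sum.inl a, Sum.inl b => dist (a : M) (b : M)
  | Sum.inl a, Sum.inr i => pairF s t i a
  | Sum.inr i, Sum.inl a => pairF s t i a
  | Sum.inr i, Sum.inr j => if i = j then 0 else m

lemma exists_pair (hD : IsUniversalDist D) (hM : IsUrysohn D M)
    (s t : Katetov D M) (hdom : t.dom = s.dom) (m : ℝ) (hm : m ∈ D) (hmpos : 0 < m)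
    (h1 : ∀ x ∈ s.dom, |s.f x - t.f x| ≤ m) (h2 : ∀ x ∈ s.dom, m ≤ s.f x + t.f x) :
    ∃ x ∈ orb s, ∃ y ∈ orb t, dist x y = m := by
  classical
  have hmemt : ∀ a : ↥s.dom, (a : M) ∈ t.dom := fun a => by rw [hdom]; exact a.2
  have hFpos : ∀ (i : Bool) (a : ↥s.dom), 0 < pairF s t i a := by
    intro i a
    cases i
    · simpa [pairF] using s.pos a a.2
    · simpa [pairF] using t.pos a (hmemt a)
  have hK1 : ∀ (i : Bool) (a b : ↥s.dom),
      |pairF s t i a - pairF s t i b| ≤ dist (a : M) (b : M) := by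
    intro i a b
    cases i
    · simpa [pairF] using s.ineq1 a a.2 b b.2
    · simpa [pairF] using t.ineq1 a (hmemt a) b (hmemt b)
  have hK2 : ∀ (i : Bool) (a b : ↥s.dom),
      dist (a : M) (b : M) ≤ pairF s t i a + pairF s t i b := by
    intro i a b
    cases i
    · simpa [pairF] using s.ineq2 a a.2 b b.2
    · simpa [pairF] using t.ineq2 a (hmemt a) b (hmemt b)
  have hP1 : ∀ (i j : Bool) (a : ↥s.dom), i ≠ j →
      |pairF s t i a - pairF s t j a| ≤ m := by
    intro i j a hij
    have h := h1 a a.2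
    have h' : |t.f a - s.f a| ≤ m := by rwa [abs_sub_comm] at h
    cases i <;> cases j <;> simp_all [pairF]
  have hP2 : ∀ (i j : Bool) (a : ↥s.dom), i ≠ j →
      m ≤ pairF s t i a + pairF s t j a := by
    intro i j a hij
    have h := h2 a a.2
    have h' : m ≤ t.f a + s.f a := by linarith
    cases i <;> cases j <;> simp_all [pairF]
  letI : MetricSpace (↥s.dom ⊕ Bool) :=
    { dist := pairDist s t m
      dist_self := by rintro (a | i) <;> simp [pairDist]
      dist_comm := by
        rintro (a | i) (b | j) <;> simp [pairDist, dist_comm]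
        by_cases h : i = j <;> simp [h, eq_comm]
      dist_triangle := by
        rintro (a | i) (b | j) (c | k) <;> simp only [pairDist]
        · exact dist_triangle _ _ _
        · have h := abs_le.mp (hK1 k a b); linarith [h.1, h.2]
        · exact hK2 j a c
        · by_cases h : j = k
          · subst h; simp
          · have hh := abs_le.mp (hP1 k j a (Ne.symm h)); simp only [if_neg h]
            linarith [hh.1, hh.2]
        · have h := abs_le.mp (hK1 i c b)
          linarith [h.1, h.2, dist_comm (c : M) (b : M)]
        · by_cases h : i = k
          · subst h; rw [if_pos rfl]; linarith [hFpos i b]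
          · simp only [if_neg h]; exact hP2 i k b h
        · by_cases h : i = j
          · subst h; simp
          · simp only [if_neg h]; have hh := abs_le.mp (hP1 i j c h)
            linarith [hh.1, hh.2]
        · cases i <;> cases j <;> cases k <;> simp <;> linarith
      eq_of_dist_eq_zero := by
        rintro (a | i) (b | j) h
        · simp only [pairDist] at h
          exact congrArg _ (Subtype.ext (dist_eq_zero.mp h))
        · exact absurd h (hFpos j a).ne'
        · exact absurd h (hFpos i b).ne'
        · simp only [pairDist] at h
          by_cases hij : i = j
          · exact congrArg _ hij
          · rw [if_neg hij] at h; exact absurd h hmpos.ne' }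
  have hDN : ∀ x y : ↥s.dom ⊕ Bool, dist x y ∈ D := by
    rintro (a | i) (b | j)
    · exact hM.2.1 _ _
    · show pairF s t j a ∈ D
      cases j
      · simpa [pairF] using s.mem a a.2
      · simpa [pairF] using t.mem a (hmemt a)
    · show pairF s t i b ∈ D
      cases i
      · simpa [pairF] using s.mem b b.2
      · simpa [pairF] using t.mem b (hmemt b)
    · show (if i = j then 0 else m) ∈ D
      by_cases h : i = j <;> simp [h, hD.2.1, hm]
  obtain ⟨f, hf⟩ := hM.2.2.2 (↥s.dom ⊕ Bool) inferInstance hDN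
  have finj : Function.Injective f := hf.injective
  set A' : Finset M := s.dom.attach.image (fun a => f (Sum.inl a)) with hA'
  set φ : M → M := fun y =>
    if h : ∃ a : ↥s.dom, f (Sum.inl a) = y then ((Classical.choose h : ↥s.dom) : M) else y
    with hφdef
  have hφ : ∀ a : ↥s.dom, φ (f (Sum.inl a)) = (a : M) := by
    intro a
    have hex : ∃ b : ↥s.dom, f (Sum.inl b) = f (Sum.inl a) := ⟨a, rfl⟩
    rw [hφdef]
    simp only [dif_pos hex]
    exact congrArg _ (Sum.inl.inj (finj (Classical.choose_spec hex)))
  have hiso : ∀ x ∈ A', ∀ y ∈ A', dist (φ x) (φ y) = dist x y := by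
    intro x hx y hy
    simp only [hA', Finset.mem_image, Finset.mem_attach, true_and] at hx hy
    obtain ⟨a, rfl⟩ := hx
    obtain ⟨b, rfl⟩ := hy
    rw [hφ a, hφ b, hf.dist_eq]
    rfl
  obtain ⟨g, hg⟩ := hM.2.2.1 A' φ hiso
  have hmemA' : ∀ a : ↥s.dom, f (Sum.inl a) ∈ A' := by
    intro a
    exact Finset.mem_image.mpr ⟨a, Finset.mem_attach _ _, rfl⟩
  have hga : ∀ a : ↥s.dom, g (f (Sum.inl a)) = (a : M) := by
    intro a; rw [hg _ (hmemA' a), hφ a]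
  have key : ∀ (i : Bool) (a : M) (ha : a ∈ s.dom),
      dist (g (f (Sum.inr i))) a = pairF s t i a := by
    intro i a ha
    calc dist (g (f (Sum.inr i))) a
        = dist (g (f (Sum.inr i))) (g (f (Sum.inl ⟨a, ha⟩))) := by rw [hga ⟨a, ha⟩]
      _ = dist (f (Sum.inr i)) (f (Sum.inl ⟨a, ha⟩)) := g.isometry.dist_eq _ _
      _ = dist (Sum.inr i : ↥s.dom ⊕ Bool) (Sum.inl ⟨a, ha⟩) := hf.dist_eq _ _
      _ = pairF s t i a := rfl
  refine ⟨g (f (Sum.inr false)), ⟨?_, ?_⟩, g (f (Sum.inr true)), ⟨?_, ?_⟩, ?_⟩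
  · intro hmem
    have := key false _ hmem
    rw [dist_self] at this
    exact absurd this.symm (hFpos false ⟨_, hmem⟩).ne'
  · intro a ha
    simpa [pairF] using key false a ha
  · intro hmem
    rw [hdom] at hmem
    have := key true _ hmem
    rw [dist_self] at this
    exact absurd this.symm (hFpos true ⟨_, hmem⟩).ne'
  · intro a ha
    rw [hdom] at ha
    simpa [pairF] using key true a ha
  · calc dist (g (f (Sum.inr false))) (g (f (Sum.inr true)))
        = dist (f (Sum.inr false)) (f (Sum.inr true)) := g.isometry.dist_eq _ _
      _ = dist (Sum.inr false : ↥s.dom ⊕ Bool) (Sum.inr true) := hf.dist_eq _ _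
      _ = m := by show (if false = true then (0:ℝ) else m) = m; simp

lemma orb_nonempty (hD : IsUniversalDist D) (hM : IsUrysohn D M) (s : Katetov D M) :
    (orb s).Nonempty := by
  classical
  rcases s.dom.eq_empty_or_nonempty with he | hne
  · obtain ⟨f, -⟩ := hM.2.2.2 PUnit inferInstance (by
      intro x y
      have : x = y := Subsingleton.elim x y
      simpa [this] using hD.2.1)
    exact ⟨f PUnit.unit, by simp [orb, he]⟩
  · set m := (s.dom.image s.f).min' (hne.image s.f) with hmdef
    have hm_mem' : m ∈ s.dom.image s.f := Finset.min'_mem _ _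
    obtain ⟨b, hb, hbm⟩ := Finset.mem_image.mp hm_mem'
    have hmD : m ∈ D := hbm ▸ s.mem b hb
    have hmpos : 0 < m := hbm ▸ s.pos b hb
    have hmle : ∀ x ∈ s.dom, m ≤ s.f x := fun x hx =>
      Finset.min'_le _ _ (Finset.mem_image_of_mem _ hx)
    obtain ⟨x, hx, -⟩ := exists_pair hD hM s s rfl m hmD hmpos
      (fun x _ => by simpa using hmpos.le)
      (fun x hx => by linarith [hmle x hx, s.pos x hx])
    exact ⟨x, hx⟩

theorem statement6 (D : Set ℝ) (hD : IsUniversalDist D) (M : Type) [MetricSpace M]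
    (hM : IsUrysohn D M) (A : Finset M) (s t : Katetov D M)
    (hs : s.dom = A) (ht : t.dom = A) :
    orbDistSet s t =
      {m | m ∈ D ∧ (∀ x ∈ A, |s.f x - t.f x| ≤ m) ∧ ∀ x ∈ A, m ≤ s.f x + t.f x} := by
  ext m
  simp only [orbDistSet, Set.mem_setOf_eq]
  constructor
  · rintro ⟨x, hx, y, hy, rfl⟩
    refine ⟨hM.2.1 x y, ?_, ?_⟩
    · intro a ha
      rw [← hx.2 a (hs ▸ ha), ← hy.2 a (ht ▸ ha)]
      exact abs_dist_sub_le x y a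
    · intro a ha
      rw [← hx.2 a (hs ▸ ha), ← hy.2 a (ht ▸ ha)]
      calc dist x y ≤ dist x a + dist a y := dist_triangle _ _ _
        _ = dist x a + dist y a := by rw [dist_comm a y]
  · rintro ⟨hmD, h1, h2⟩
    by_cases hm0 : m = 0
    · subst hm0
      have hft : ∀ x ∈ A, s.f x = t.f x := by
        intro x hx
        have habs : |s.f x - t.f x| = 0 := le_antisymm (h1 x hx) (abs_nonneg _)
        have := abs_eq_zero.mp habs
        linarith
      obtain ⟨x, hx⟩ := orb_nonempty hD hM s
      refine ⟨x, hx, x, ⟨?_, ?_⟩, dist_self x⟩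
      · rw [ht, ← hs]; exact hx.1
      · intro a ha
        rw [ht] at ha
        rw [hx.2 a (hs ▸ ha)]
        exact hft a ha
    · have hmpos : 0 < m := lt_of_le_of_ne (hD.2.2.1 m hmD) (Ne.symm hm0)
      exact exists_pair hD hM s t (ht.trans hs.symm) m hmD hmpos
        (fun x hx => h1 x (hs ▸ hx)) (fun x hx => h2 x (hs ▸ hx))

end Sauer
end

section
/- Let r be a jump number of D and M the countable Urysohn space with distance set D. For any finitely many pairwise distinct ~-equivalence classes A₀, …, A_{n−1} (where x ~ y iff d(x,y) ≤ r), there exist points a_i ∈ A_i such that d(a_i, a_j) = d_min(A_i, A_j) for all i, j. -/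
namespace Sauer

variable {D : Set ℝ} {M : Type} [MetricSpace M]

section Aux

noncomputable def optDist {ι : Type} (p : ι → M) (φ : ι → ℝ) :
    Option ι → Option ι → ℝ
  | none, none => 0
  | none, some i => φ i
  | some i, none => φ i
  | some i, some j => dist (p i) (p j)

noncomputable def optMetric {ι : Type} (p : ι → M) (φ : ι → ℝ)
    (hinj : Function.Injective p) (hpos : ∀ i, 0 < φ i)
    (h1 : ∀ i j, |φ i - φ j| ≤ dist (p i) (p j))
    (h2 : ∀ i j, dist (p i) (p j) ≤ φ i + φ j) :
    MetricSpace (Option ι) where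
  dist := optDist p φ
  dist_self x := by cases x <;> simp [optDist]
  dist_comm x y := by
    cases x <;> cases y <;> simp [optDist, dist_comm]
  dist_triangle x y z := by
    have habs : ∀ i j : ι, φ i - φ j ≤ dist (p i) (p j) := fun i j =>
      (abs_le.mp (h1 i j)).2.trans_eq' (by ring_nf)
    rcases x with _ | i <;> rcases y with _ | j <;> rcases z with _ | k <;>
      simp only [optDist]
    · norm_num
    · simp
    · have := hpos j; linarith
    · have := habs k j; rw [dist_comm (p j) (p k)]; linarith
    · simp
    · exact h2 i k
    · linarith [habs i j]
    · exact dist_triangle _ _ _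
  eq_of_dist_eq_zero := by
    intro x y h
    rcases x with _ | i <;> rcases y with _ | j <;> simp only [optDist] at h
    · rfl
    · exact absurd h (ne_of_gt (hpos _))
    · exact absurd h (ne_of_gt (hpos _))
    · exact congrArg _ (hinj (eq_of_dist_eq_zero h))

theorem realize {D : Set ℝ} (h0 : (0:ℝ) ∈ D) (hM : IsUrysohn D M)
    {ι : Type} [Fintype ι] (p : ι → M) (φ : ι → ℝ)
    (hinj : Function.Injective p)
    (hmem : ∀ i, φ i ∈ D) (hpos : ∀ i, 0 < φ i)
    (h1 : ∀ i j, |φ i - φ j| ≤ dist (p i) (p j))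
    (h2 : ∀ i j, dist (p i) (p j) ≤ φ i + φ j) :
    ∃ z : M, ∀ i, dist z (p i) = φ i := by
  classical
  letI N := optMetric p φ hinj hpos h1 h2
  have hNd : ∀ x y : Option ι, dist x y ∈ D := by
    intro x y
    rcases x with _ | i <;> rcases y with _ | j
    · exact h0
    · exact hmem j
    · exact hmem i
    · exact hM.2.1 _ _
  obtain ⟨f, hf⟩ := hM.2.2.2 (Option ι) inferInstance hNd
  have hfd : ∀ x y : Option ι, dist (f x) (f y) = dist x y := fun x y => hf.dist_eq x y
  have hfinj : Function.Injective f := hf.injective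
  set A : Finset M := Finset.univ.image (fun i : ι => f (some i)) with hA
  set g₀ : M → M := fun u =>
    if h : ∃ i : ι, f (some i) = u then p (Classical.choose h) else u with hg₀
  have hg₀val : ∀ i : ι, g₀ (f (some i)) = p i := by
    intro i
    have h : ∃ j : ι, f (some j) = f (some i) := ⟨i, rfl⟩
    have := Classical.choose_spec h
    have : Classical.choose h = i := by
      have := hfinj this
      exact Option.some_injective ι this
    simp only [hg₀, dif_pos h, this]
  have hpres : ∀ x ∈ A, ∀ y ∈ A, dist (g₀ x) (g₀ y) = dist x y := by
    intro x hx y hy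
    simp only [hA, Finset.mem_image, Finset.mem_univ, true_and] at hx hy
    obtain ⟨i, rfl⟩ := hx
    obtain ⟨j, rfl⟩ := hy
    rw [hg₀val i, hg₀val j, hfd]
    rfl
  obtain ⟨g, hg⟩ := hM.2.2.1 A g₀ hpres
  refine ⟨g (f none), fun i => ?_⟩
  have hmemA : f (some i) ∈ A := by simp [hA]
  have : (p i : M) = g (f (some i)) := by rw [hg _ hmemA, hg₀val i]
  rw [this, g.dist_eq, hfd]
  rfl

end Aux

section Classes

variable {r : ℝ} {n : ℕ} {a : Fin n → M}

/-- shorthand for the class of index i -/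
def cls (a : Fin n → M) (r : ℝ) (i : Fin n) : Set M := {x | dist x (a i) ≤ r}

/-- the set of cross distances -/
def crossSet (a : Fin n → M) (r : ℝ) (i j : Fin n) : Set ℝ :=
  {d | ∃ x ∈ cls a r i, ∃ y ∈ cls a r j, dist x y = d}

lemma dmin_cls (i j : Fin n) :
    dmin (cls a r i) (cls a r j) = sInf (crossSet a r i j) := rfl

lemma mem_cls_self (hr0 : 0 ≤ r) (i : Fin n) : a i ∈ cls a r i := by
  simp [cls, hr0]

lemma crossSet_subset (hM : IsUrysohn D M) (i j : Fin n) : crossSet a r i j ⊆ D := by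
  rintro d ⟨x, _, y, _, rfl⟩
  exact hM.2.1 x y

lemma crossSet_nonempty (hr0 : 0 ≤ r) (i j : Fin n) : (crossSet a r i j).Nonempty :=
  ⟨dist (a i) (a j), a i, mem_cls_self hr0 i, a j, mem_cls_self hr0 j, rfl⟩

lemma dmin_le (hD : IsUniversalDist D) (hM : IsUrysohn D M) {i j : Fin n} {x y : M}
    (hx : x ∈ cls a r i) (hy : y ∈ cls a r j) :
    dmin (cls a r i) (cls a r j) ≤ dist x y :=
  csInf_le ((hD.1.subset (crossSet_subset hM i j)).bddBelow) ⟨x, hx, y, hy, rfl⟩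

lemma dmin_mem (hD : IsUniversalDist D) (hM : IsUrysohn D M) (hr0 : 0 ≤ r) (i j : Fin n) :
    dmin (cls a r i) (cls a r j) ∈ crossSet a r i j :=
  (crossSet_nonempty hr0 i j).csInf_mem (hD.1.subset (crossSet_subset hM i j))

lemma dmin_mem_D (hD : IsUniversalDist D) (hM : IsUrysohn D M) (hr0 : 0 ≤ r) (i j : Fin n) :
    dmin (cls a r i) (cls a r j) ∈ D :=
  crossSet_subset hM i j (dmin_mem hD hM hr0 i j)

lemma dmin_self (hD : IsUniversalDist D) (hM : IsUrysohn D M) (hr0 : 0 ≤ r) (i : Fin n) :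
    dmin (cls a r i) (cls a r i) = 0 := by
  refine le_antisymm ?_ ?_
  · have := dmin_le hD hM (mem_cls_self hr0 i) (mem_cls_self hr0 i) (a := a)
    simpa using this
  · refine le_csInf (crossSet_nonempty hr0 i i) ?_
    rintro d ⟨x, _, y, _, rfl⟩
    exact dist_nonneg

lemma dmin_symm (i j : Fin n) :
    dmin (cls a r i) (cls a r j) = dmin (cls a r j) (cls a r i) := by
  unfold dmin
  congr 1
  ext d
  constructor
  · rintro ⟨x, hx, y, hy, rfl⟩; exact ⟨y, hy, x, hx, dist_comm y x⟩
  · rintro ⟨x, hx, y, hy, rfl⟩; exact ⟨y, hy, x, hx, dist_comm y x⟩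

/-- jump transitivity -/
lemma jump_trans (hM : IsUrysohn D M) (hr : IsJump D r) {x y z : M}
    (h1 : dist x y ≤ r) (h2 : dist y z ≤ r) : dist x z ≤ r := by
  by_contra h
  push_neg at h
  have h3 := hr.2 _ (hM.2.1 x z) h
  have h4 := dist_triangle x y z
  linarith

lemma cls_diam (hM : IsUrysohn D M) (hr : IsJump D r) {i : Fin n} {x y : M}
    (hx : x ∈ cls a r i) (hy : y ∈ cls a r i) : dist x y ≤ r := by
  have h2 : dist (a i) y ≤ r := by rw [dist_comm]; exact hy
  exact jump_trans hM hr hx h2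

lemma cross_gt (hM : IsUrysohn D M) (hr : IsJump D r)
    (hdistinct : ∀ i j, i ≠ j → r < dist (a i) (a j)) {i j : Fin n} (hij : i ≠ j)
    {x y : M} (hx : x ∈ cls a r i) (hy : y ∈ cls a r j) : 2 * r < dist x y := by
  have hgt : r < dist x y := by
    by_contra h
    push_neg at h
    have h1 : dist (a i) y ≤ r := by
      have := jump_trans hM hr (x := a i) (y := x) (z := y) (by rw [dist_comm]; exact hx) h
      exact this
    have h2 : dist (a i) (a j) ≤ r := jump_trans hM hr h1 hy
    exact absurd h2 (not_le.mpr (hdistinct i j hij))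
  exact hr.2 _ (hM.2.1 x y) hgt

lemma dmin_pos (hD : IsUniversalDist D) (hM : IsUrysohn D M) (hr : IsJump D r) (hr0 : 0 ≤ r)
    (hdistinct : ∀ i j, i ≠ j → r < dist (a i) (a j)) {i j : Fin n} (hij : i ≠ j) :
    2 * r < dmin (cls a r i) (cls a r j) := by
  obtain ⟨x, hx, y, hy, hd⟩ := dmin_mem hD hM hr0 i j
  rw [← hd]
  exact cross_gt hM hr hdistinct hij hx hy

end Classes

section Main

variable {r : ℝ} {n : ℕ} {a : Fin n → M}

/-- Lemma A: from any point of class i, the minimum distance to class j is attained. -/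
lemma lemmaA (hD : IsUniversalDist D) (hM : IsUrysohn D M) (hr : IsJump D r) (hrpos : 0 < r)
    (hdistinct : ∀ i j, i ≠ j → r < dist (a i) (a j)) {i j : Fin n} (hij : i ≠ j)
    {x : M} (hx : x ∈ cls a r i) :
    ∃ t ∈ cls a r j, dist x t = dmin (cls a r i) (cls a r j) := by
  classical
  have hr0 : (0:ℝ) ≤ r := le_of_lt hrpos
  set m := dmin (cls a r i) (cls a r j) with hm
  have h2r : 2 * r < m := dmin_pos hD hM hr hr0 hdistinct hij
  have hmpos : 0 < m := by linarith
  have hmr : r ≤ m := by linarith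
  set T : Set ℝ := {d | ∃ y ∈ cls a r j, dist x y = d} with hT
  have hTsub : T ⊆ D := by rintro d ⟨y, _, rfl⟩; exact hM.2.1 x y
  have hTne : T.Nonempty := ⟨dist x (a j), a j, mem_cls_self hr0 j, rfl⟩
  obtain ⟨y, hy, hxy⟩ : sInf T ∈ T := hTne.csInf_mem (hD.1.subset hTsub)
  obtain ⟨p, hp, q, hq, hpq⟩ := dmin_mem hD hM hr0 i j
  have hnu_le : dist x y ≤ m + r := by
    have h1 : sInf T ≤ dist x q := csInf_le ((hD.1.subset hTsub).bddBelow) ⟨q, hq, rfl⟩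
    have h2 : dist x q ≤ dist x p + dist p q := dist_triangle x p q
    have h3 : dist x p ≤ r := cls_diam hM hr hx hp
    rw [hpq] at h2
    rw [hxy]
    linarith
  have hm_le : m ≤ dist x y := dmin_le hD hM hx hy
  have hxyne : x ≠ y := by
    intro h
    rw [h, dist_self] at hm_le
    linarith
  have hd2 : m ≤ dist y x := by rw [dist_comm]; exact hm_le
  have hd4 : dist y x ≤ m + r := by rw [dist_comm]; exact hnu_le
  have c1 : Function.Injective (fun b : Bool => cond b y x) := by
    intro b c hbc
    cases b <;> cases c <;> simp only [Bool.cond_false, Bool.cond_true] at hbc ⊢ <;>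
      first
        | rfl
        | exact absurd hbc hxyne
        | exact absurd hbc.symm hxyne
  have c2 : ∀ b : Bool, (fun b : Bool => cond b r m) b ∈ D := by
    intro b; cases b
    · simpa using dmin_mem_D hD hM hr0 i j
    · simpa using hr.1
  have c3 : ∀ b : Bool, 0 < (fun b : Bool => cond b r m) b := by
    intro b; cases b
    · simpa using hmpos
    · simpa using hrpos
  have c4 : ∀ b c : Bool, |(fun b : Bool => cond b r m) b - (fun b : Bool => cond b r m) c| ≤
      dist ((fun b : Bool => cond b y x) b) ((fun b : Bool => cond b y x) c) := by
    intro b c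
    cases b <;> cases c <;> simp only [Bool.cond_false, Bool.cond_true] <;>
      first
        | simp
        | (rw [abs_of_nonneg (by linarith : (0:ℝ) ≤ m - r)]; linarith)
        | (rw [abs_of_nonpos (by linarith : r - m ≤ (0:ℝ))]; linarith)
  have c5 : ∀ b c : Bool, dist ((fun b : Bool => cond b y x) b) ((fun b : Bool => cond b y x) c) ≤
      (fun b : Bool => cond b r m) b + (fun b : Bool => cond b r m) c := by
    intro b c
    cases b <;> cases c <;> simp only [Bool.cond_false, Bool.cond_true] <;>
      first
        | (rw [dist_self]; linarith)
        | linarith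
  obtain ⟨z, hz⟩ := realize hD.2.1 hM _ _ c1 c2 c3 c4 c5
  have hzx : dist z x = m := by simpa using hz false
  have hzy : dist z y = r := by simpa using hz true
  refine ⟨z, ?_, by rw [dist_comm]; exact hzx⟩
  exact jump_trans hM hr (le_of_eq hzy) hy

/-- triangle inequality for minimum distances -/
lemma dmin_tri (hD : IsUniversalDist D) (hM : IsUrysohn D M) (hr : IsJump D r) (hrpos : 0 < r)
    (hdistinct : ∀ i j, i ≠ j → r < dist (a i) (a j)) {i j k : Fin n} (hjk : j ≠ k) :
    dmin (cls a r i) (cls a r k) ≤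
      dmin (cls a r i) (cls a r j) + dmin (cls a r j) (cls a r k) := by
  have hr0 : (0:ℝ) ≤ r := le_of_lt hrpos
  obtain ⟨p, hp, t, ht, hpt⟩ := dmin_mem hD hM hr0 i j
  obtain ⟨s, hs, hts⟩ := lemmaA hD hM hr hrpos hdistinct hjk ht
  calc dmin (cls a r i) (cls a r k) ≤ dist p s := dmin_le hD hM hp hs
    _ ≤ dist p t + dist t s := dist_triangle p t s
    _ = _ := by rw [hpt, hts]

/-- any cross pair is within r of the minimum -/
lemma cross_le (hD : IsUniversalDist D) (hM : IsUrysohn D M) (hr : IsJump D r) (hrpos : 0 < r)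
    (hdistinct : ∀ i j, i ≠ j → r < dist (a i) (a j)) {i j : Fin n} (hij : i ≠ j)
    {x y : M} (hx : x ∈ cls a r i) (hy : y ∈ cls a r j) :
    dist x y ≤ dmin (cls a r i) (cls a r j) + r := by
  obtain ⟨t, ht, hxt⟩ := lemmaA hD hM hr hrpos hdistinct hij hx
  calc dist x y ≤ dist x t + dist t y := dist_triangle x t y
    _ ≤ _ := by
        have := cls_diam hM hr ht hy
        rw [hxt]; linarith

lemma step (hD : IsUniversalDist D) (hM : IsUrysohn D M) (hr : IsJump D r) (hrpos : 0 < r)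
    (hdistinct : ∀ i j, i ≠ j → r < dist (a i) (a j)) (S : Finset (Fin n)) (k : Fin n)
    (hk : k ∉ S) (w : Fin n → M) (hw1 : ∀ i ∈ S, w i ∈ cls a r i)
    (hw2 : ∀ i ∈ S, ∀ j ∈ S, dist (w i) (w j) = dmin (cls a r i) (cls a r j)) :
    ∃ z ∈ cls a r k, ∀ i ∈ S, dist z (w i) = dmin (cls a r i) (cls a r k) := by
  classical
  have hr0 : (0:ℝ) ≤ r := le_of_lt hrpos
  set mv : Fin n → ℝ := fun i => dmin (cls a r i) (cls a r k) with hmv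
  have hnek : ∀ i ∈ S, i ≠ k := fun i hi h => hk (h ▸ hi)
  have hmpos : ∀ i ∈ S, 0 < mv i := by
    intro i hi
    have := dmin_pos hD hM hr hr0 hdistinct (hnek i hi)
    simp only [hmv]
    linarith
  have hrm : ∀ i ∈ S, r ≤ mv i := by
    intro i hi
    have := dmin_pos hD hM hr hr0 hdistinct (hnek i hi)
    simp only [hmv]
    linarith
  have hm_le_d : ∀ i ∈ S, mv i ≤ dist (w i) (a k) :=
    fun i hi => dmin_le hD hM (hw1 i hi) (mem_cls_self hr0 k)
  have hd_le : ∀ i ∈ S, dist (w i) (a k) ≤ mv i + r :=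
    fun i hi => cross_le hD hM hr hrpos hdistinct (hnek i hi) (hw1 i hi) (mem_cls_self hr0 k)
  have htri1 : ∀ i ∈ S, ∀ j ∈ S, mv i ≤ dmin (cls a r i) (cls a r j) + mv j :=
    fun i _ j hj => dmin_tri hD hM hr hrpos hdistinct (hnek j hj)
  have htri2 : ∀ i ∈ S, ∀ j ∈ S, dmin (cls a r i) (cls a r j) ≤ mv i + mv j := by
    intro i hi j hj
    have h1 : dmin (cls a r i) (cls a r j) ≤ mv i + dmin (cls a r k) (cls a r j) :=
      dmin_tri hD hM hr hrpos hdistinct (Ne.symm (hnek j hj))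
    have h2 : dmin (cls a r k) (cls a r j) = mv j := dmin_symm k j
    rw [h2] at h1
    exact h1
  set ι := {i : Fin n // i ∈ S} with hι
  set p : Option ι → M := fun o => Option.elim o (a k) (fun i => w i.1) with hp
  set φ : Option ι → ℝ := fun o => Option.elim o r (fun i => mv i.1) with hφ
  have c1 : Function.Injective p := by
    rintro (_ | i) (_ | j) hij <;> simp only [hp, Option.elim] at hij
    · rfl
    · exfalso
      have h1 : dist (w j.1) (a k) = 0 := by rw [hij]; exact dist_self _
      have := hm_le_d j.1 j.2
      have := hmpos j.1 j.2
      linarith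
    · exfalso
      have h1 : dist (w i.1) (a k) = 0 := by rw [hij]; exact dist_self _
      have := hm_le_d i.1 i.2
      have := hmpos i.1 i.2
      linarith
    · congr 1
      ext
      by_contra hne2
      have hij2 : (i.1 : Fin n) ≠ j.1 := fun h => hne2 (by rw [h])
      have hd : dist (w i.1) (w j.1) = dmin (cls a r i.1) (cls a r j.1) := hw2 _ i.2 _ j.2
      rw [hij] at hd
      rw [dist_self] at hd
      have := dmin_pos hD hM hr hr0 hdistinct hij2
      linarith
  have c2 : ∀ o, φ o ∈ D := by
    rintro (_ | i) <;> simp only [hφ, Option.elim]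
    · exact hr.1
    · exact dmin_mem_D hD hM hr0 i.1 k
  have c3 : ∀ o, 0 < φ o := by
    rintro (_ | i) <;> simp only [hφ, Option.elim]
    · exact hrpos
    · exact hmpos i.1 i.2
  have c4 : ∀ o o', |φ o - φ o'| ≤ dist (p o) (p o') := by
    rintro (_ | i) (_ | j) <;> simp only [hp, hφ, Option.elim]
    · simp
    · rw [abs_sub_comm, dist_comm, abs_of_nonneg (sub_nonneg.mpr (hrm j.1 j.2))]
      linarith [hm_le_d j.1 j.2, hrpos]
    · rw [abs_of_nonneg (sub_nonneg.mpr (hrm i.1 i.2))]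
      linarith [hm_le_d i.1 i.2, hrpos]
    · have h1 := htri1 i.1 i.2 j.1 j.2
      have h2 := htri1 j.1 j.2 i.1 i.2
      have hsymm : dmin (cls a r j.1) (cls a r i.1) = dmin (cls a r i.1) (cls a r j.1) :=
        dmin_symm j.1 i.1
      rw [hsymm] at h2
      rcases eq_or_ne (i.1 : Fin n) j.1 with heq | hne3
      · have hsub : (i : ι) = j := Subtype.ext heq
        subst hsub
        simp
      · rw [abs_le, hw2 _ i.2 _ j.2]
        constructor <;> linarith
  have c5 : ∀ o o', dist (p o) (p o') ≤ φ o + φ o' := by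
    rintro (_ | i) (_ | j) <;> simp only [hp, hφ, Option.elim]
    · simp [hrpos.le]
    · rw [dist_comm]
      linarith [hd_le j.1 j.2]
    · linarith [hd_le i.1 i.2]
    · rcases eq_or_ne (i.1 : Fin n) j.1 with heq | hne3
      · have hsub : (i : ι) = j := Subtype.ext heq
        subst hsub
        rw [dist_self]
        linarith [hmpos i.1 i.2]
      · rw [hw2 _ i.2 _ j.2]
        exact htri2 i.1 i.2 j.1 j.2
  obtain ⟨z, hz⟩ := realize hD.2.1 hM p φ c1 c2 c3 c4 c5
  refine ⟨z, ?_, ?_⟩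
  · have h := hz none
    simp only [hp, hφ, Option.elim] at h
    exact le_of_eq h
  · intro i hi
    have h := hz (some ⟨i, hi⟩)
    simp only [hp, hφ, Option.elim] at h
    exact h


theorem statement11 (D : Set ℝ) (hD : IsUniversalDist D) (M : Type) [MetricSpace M]
    (hM : IsUrysohn D M) (r : ℝ) (hr : IsJump D r) (n : ℕ) (a : Fin n → M)
    (hdistinct : ∀ i j, i ≠ j → r < dist (a i) (a j)) :
    ∃ w : Fin n → M, (∀ i, dist (w i) (a i) ≤ r) ∧
      ∀ i j, dist (w i) (w j) =
        dmin {x : M | dist x (a i) ≤ r} {x : M | dist x (a j) ≤ r} := by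
  classical
  have hr0 : (0:ℝ) ≤ r := hD.2.2.1 r hr.1
  rcases hr0.eq_or_lt with heq | hrpos
  · -- degenerate case r = 0 : all classes are singletons
    refine ⟨a, fun i => by simpa [dist_self] using hr0, fun i j => ?_⟩
    by_cases hij : i = j
    · subst hij
      rw [dist_self]
      exact (dmin_self hD hM hr0 i).symm
    · have hset : crossSet a r i j = {dist (a i) (a j)} := by
        ext d
        constructor
        · rintro ⟨x, hx, y, hy, rfl⟩
          have hx' : x = a i := by
            have : dist x (a i) ≤ 0 := by rw [heq]; exact hx
            exact dist_le_zero.mp this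
          have hy' : y = a j := by
            have : dist y (a j) ≤ 0 := by rw [heq]; exact hy
            exact dist_le_zero.mp this
          rw [hx', hy']
          rfl
        · rintro rfl
          exact ⟨a i, mem_cls_self hr0 i, a j, mem_cls_self hr0 j, rfl⟩
      have : dmin (cls a r i) (cls a r j) = dist (a i) (a j) := by
        rw [dmin_cls, hset, csInf_singleton]
      exact this.symm
  · -- main case r > 0
    have main : ∀ S : Finset (Fin n), ∃ w : Fin n → M,
        (∀ i ∈ S, w i ∈ cls a r i) ∧
        ∀ i ∈ S, ∀ j ∈ S, dist (w i) (w j) = dmin (cls a r i) (cls a r j) := by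
      intro S
      induction S using Finset.induction_on with
      | empty => exact ⟨a, by simp, by simp⟩
      | @insert k S hk ih =>
        obtain ⟨w, hw1, hw2⟩ := ih
        obtain ⟨z, hz1, hz2⟩ := step hD hM hr hrpos hdistinct S k hk w hw1 hw2
        refine ⟨Function.update w k z, ?_, ?_⟩
        · intro i hi
          rcases Finset.mem_insert.mp hi with rfl | hi'
          · rw [Function.update_self]; exact hz1
          · rw [Function.update_of_ne (ne_of_mem_of_not_mem hi' hk)]
            exact hw1 i hi'
        · intro i hi j hj
          rcases Finset.mem_insert.mp hi with hik | hi' <;>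
            rcases Finset.mem_insert.mp hj with hjk | hj'
          · subst hik
            subst hjk
            rw [Function.update_self, dist_self]
            exact (dmin_self hD hM hr0 _).symm
          · subst hik
            rw [Function.update_self,
              Function.update_of_ne (ne_of_mem_of_not_mem hj' hk)]
            rw [hz2 j hj']
            exact dmin_symm _ _
          · subst hjk
            rw [Function.update_self,
              Function.update_of_ne (ne_of_mem_of_not_mem hi' hk), dist_comm]
            exact hz2 i hi'
          · rw [Function.update_of_ne (ne_of_mem_of_not_mem hi' hk),
              Function.update_of_ne (ne_of_mem_of_not_mem hj' hk)]
            exact hw2 i hi' j hj'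
    obtain ⟨w, hw1, hw2⟩ := main Finset.univ
    exact ⟨w, fun i => hw1 i (Finset.mem_univ i),
      fun i j => hw2 i (Finset.mem_univ i) j (Finset.mem_univ j)⟩


end Main
end Sauer
end
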